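/- Suppose Col(D(μ)⁻¹ B(μ) H(μ)*) ⊆ Col(V) and Col((C(μ) D(μ)⁻¹)*) ⊆ Col(W) (the subspace construction used when m > p). Let v ∈ ℂ^m, w ∈ ℂ^p and σ > 0 satisfy H(μ) v = σ w and H(μ)* w = σ v (a pair of singular vectors of H(μ) with singular value σ). Then w* H′(μ) v = w* H̃′(μ) v. -/

import Mathlib

open Matrix

attribute [local instance] Matrix.normedAddCommGroup Matrix.normedSpace

section Helpers
variable {a b c : ℕ} {μ : ℂ}

private theorem hasDerivAt_matrix {f : ℂ → Matrix (Fin a) (Fin b) ℂ} {f' : Matrix (Fin a) (Fin b) ℂ}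
    (h : ∀ i j, HasDerivAt (fun s => f s i j) (f' i j) μ) : HasDerivAt f f' μ :=
  hasDerivAt_pi.2 fun i => hasDerivAt_pi.2 fun j => h i j

private theorem entry_hasDerivAt {f : ℂ → Matrix (Fin a) (Fin b) ℂ}
    (h : DifferentiableAt ℂ f μ) (i : Fin a) (j : Fin b) :
    HasDerivAt (fun s => f s i j) (deriv f μ i j) μ :=
  hasDerivAt_pi.1 (hasDerivAt_pi.1 h.hasDerivAt i) j

private theorem hasDerivAt_matrix_mul {f : ℂ → Matrix (Fin a) (Fin b) ℂ}
    {g : ℂ → Matrix (Fin b) (Fin c) ℂ}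
    {f' : Matrix (Fin a) (Fin b) ℂ} {g' : Matrix (Fin b) (Fin c) ℂ}
    (hf : HasDerivAt f f' μ) (hg : HasDerivAt g g' μ) :
    HasDerivAt (fun s => f s * g s) (f' * g μ + f μ * g') μ := by
  apply hasDerivAt_matrix
  intro i j
  have h1 : ∀ s, (f s * g s) i j = ∑ l, f s i l * g s l j := fun s => Matrix.mul_apply
  simp only [h1]
  have h2 : (f' * g μ + f μ * g') i j = ∑ l, (f' i l * g μ l j + f μ i l * g' l j) := by
    simp [Matrix.mul_apply, Finset.sum_add_distrib]
  rw [h2]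
  exact HasDerivAt.fun_sum fun l _ =>
    ((hasDerivAt_pi.1 (hasDerivAt_pi.1 hf i) l).mul (hasDerivAt_pi.1 (hasDerivAt_pi.1 hg l) j))

private theorem diffAt_det {f : ℂ → Matrix (Fin a) (Fin a) ℂ}
    (h : ∀ i j, DifferentiableAt ℂ (fun s => f s i j) μ) :
    DifferentiableAt ℂ (fun s => (f s).det) μ := by
  simp only [Matrix.det_apply]
  apply DifferentiableAt.fun_sum
  intro σ _
  simp only [Units.smul_def, zsmul_eq_mul]
  exact (differentiableAt_const _).mul (DifferentiableAt.fun_finsetProd fun i _ => h (σ i) i)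

private theorem diffAt_matrix_inv {f : ℂ → Matrix (Fin a) (Fin a) ℂ}
    (h : DifferentiableAt ℂ f μ) (hu : IsUnit (f μ)) :
    DifferentiableAt ℂ (fun s => (f s)⁻¹) μ := by
  have hdet0 : (f μ).det ≠ 0 := IsUnit.ne_zero ((Matrix.isUnit_iff_isUnit_det (f μ)).1 hu)
  have hent : ∀ i j, DifferentiableAt ℂ (fun s => f s i j) μ := fun i j =>
    ((entry_hasDerivAt h i j).differentiableAt)
  have hdet : DifferentiableAt ℂ (fun s => (f s).det) μ := diffAt_det hent
  have hadj : DifferentiableAt ℂ (fun s => (f s).adjugate) μ := by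
    apply differentiableAt_pi.2; intro i
    apply differentiableAt_pi.2; intro j
    have hh : (fun s => (f s).adjugate i j) = fun s => ((f s).updateRow j (Pi.single i 1)).det := by
      funext s; rw [Matrix.adjugate_apply]
    rw [hh]
    apply diffAt_det
    intro i' j'
    by_cases hij : i' = j
    · simp only [Matrix.updateRow_apply, hij, if_pos rfl]
      exact differentiableAt_const _
    · simp only [Matrix.updateRow_apply, if_neg hij]
      exact hent i' j'
  have hh : (fun s => (f s)⁻¹) = fun s => Ring.inverse (f s).det • (f s).adjugate := by
    funext s; rw [Matrix.inv_def]
  rw [hh]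
  simp only [Ring.inverse_eq_inv]
  exact (hdet.inv hdet0).smul hadj

private theorem hasDerivAt_matrix_inv {f : ℂ → Matrix (Fin a) (Fin a) ℂ}
    {f' : Matrix (Fin a) (Fin a) ℂ}
    (h : HasDerivAt f f' μ) (hu : IsUnit (f μ)) :
    HasDerivAt (fun s => (f s)⁻¹) (-((f μ)⁻¹ * f' * (f μ)⁻¹)) μ := by
  have hdet0 : (f μ).det ≠ 0 := IsUnit.ne_zero ((Matrix.isUnit_iff_isUnit_det (f μ)).1 hu)
  have hdiff : DifferentiableAt ℂ (fun s => (f s)⁻¹) μ := diffAt_matrix_inv h.differentiableAt hu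
  set X' := deriv (fun s => (f s)⁻¹) μ with hX'
  have hXd : HasDerivAt (fun s => (f s)⁻¹) X' μ := hdiff.hasDerivAt
  have hdetc : ContinuousAt (fun s => (f s).det) μ :=
    (diffAt_det fun i j => (entry_hasDerivAt h.differentiableAt i j).differentiableAt).continuousAt
  have hev : ∀ᶠ s in nhds μ, (f s).det ≠ 0 := hdetc.eventually_ne hdet0
  have hev1 : (fun s => f s * (f s)⁻¹) =ᶠ[nhds μ] fun _ => (1 : Matrix (Fin a) (Fin a) ℂ) := by
    filter_upwards [hev] with s hs
    exact Matrix.mul_nonsing_inv (f s) (isUnit_iff_ne_zero.2 hs)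
  have hprod : HasDerivAt (fun s => f s * (f s)⁻¹) (f' * (f μ)⁻¹ + f μ * X') μ :=
    hasDerivAt_matrix_mul h hXd
  have hconst : HasDerivAt (fun s => f s * (f s)⁻¹) 0 μ :=
    (hasDerivAt_const μ (1 : Matrix (Fin a) (Fin a) ℂ)).congr_of_eventuallyEq hev1
  have hzero : f' * (f μ)⁻¹ + f μ * X' = 0 := hprod.unique hconst
  have hXval : X' = -((f μ)⁻¹ * f' * (f μ)⁻¹) := by
    have h1 : f μ * X' = -(f' * (f μ)⁻¹) := by
      rw [eq_neg_iff_add_eq_zero, add_comm]; exact hzero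
    have h2 : (f μ)⁻¹ * (f μ * X') = X' := by
      rw [← Matrix.mul_assoc, Matrix.nonsing_inv_mul (f μ) (isUnit_iff_ne_zero.2 hdet0),
        Matrix.one_mul]
    rw [← h2, h1, Matrix.mul_neg, Matrix.mul_assoc]
  rw [← hXval]; exact hXd

end Helpers

/-- Hermite interpolation of the derivative in the direction of a singular pair,
for the subspace construction used when `m > p`:
if `Col(D(μ)⁻¹ B(μ) H(μ)ᴴ) ⊆ Col(V)` and `Col((C(μ) D(μ)⁻¹)ᴴ) ⊆ Col(W)`,
and `H(μ) v = σ w`, `H(μ)ᴴ w = σ v` with `σ > 0`, then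
`wᴴ H′(μ) v = wᴴ H̃′(μ) v`. -/
theorem singular_value_derivative_interpolation_m_gt_p
    {n m p k : ℕ} (μ : ℂ)
    (B : ℂ → Matrix (Fin n) (Fin m) ℂ) (C : ℂ → Matrix (Fin p) (Fin n) ℂ)
    (D : ℂ → Matrix (Fin n) (Fin n) ℂ)
    (hB : DifferentiableAt ℂ B μ) (hC : DifferentiableAt ℂ C μ)
    (hD : DifferentiableAt ℂ D μ)
    (hDμ : IsUnit (D μ))
    (V W : Matrix (Fin n) (Fin k) ℂ)
    (hWDV : IsUnit (Wᴴ * D μ * V))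
    (hcolV : LinearMap.range ((D μ)⁻¹ * B μ * (C μ * (D μ)⁻¹ * B μ)ᴴ).mulVecLin ≤ LinearMap.range V.mulVecLin)
    (hcolW : LinearMap.range ((C μ * (D μ)⁻¹)ᴴ).mulVecLin ≤
      LinearMap.range W.mulVecLin)
    (v : Fin m → ℂ) (w : Fin p → ℂ) (σ : ℝ) (hσ : 0 < σ)
    (hv : (C μ * (D μ)⁻¹ * B μ).mulVec v = (σ : ℂ) • w)
    (hw : (C μ * (D μ)⁻¹ * B μ)ᴴ.mulVec w = (σ : ℂ) • v) :
    star w ⬝ᵥ (deriv (fun s => C s * (D s)⁻¹ * B s) μ).mulVec v =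
      star w ⬝ᵥ (deriv (fun s => (C s * V) * (Wᴴ * D s * V)⁻¹ * (Wᴴ * B s)) μ).mulVec v := by
  have hdD : IsUnit (D μ).det := (Matrix.isUnit_iff_isUnit_det _).1 hDμ
  have hdK : IsUnit (Wᴴ * D μ * V).det := (Matrix.isUnit_iff_isUnit_det _).1 hWDV
  have hDi : D μ * (D μ)⁻¹ = 1 := Matrix.mul_nonsing_inv _ hdD
  have hiD : (D μ)⁻¹ * D μ = 1 := Matrix.nonsing_inv_mul _ hdD
  set K := (Wᴴ * D μ * V)⁻¹ with hKdef
  have hKi : (Wᴴ * D μ * V) * K = 1 := Matrix.mul_nonsing_inv _ hdK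
  have hiK : K * (Wᴴ * D μ * V) = 1 := Matrix.nonsing_inv_mul _ hdK
  have hσ0 : (σ : ℂ) ≠ 0 := by exact_mod_cast ne_of_gt hσ
  -- x := (D μ)⁻¹ B μ v lies in Col V
  have hxmem : ((D μ)⁻¹ * B μ).mulVec v ∈ LinearMap.range V.mulVecLin := by
    have h1 : ((D μ)⁻¹ * B μ * (C μ * (D μ)⁻¹ * B μ)ᴴ).mulVecLin w ∈
        LinearMap.range V.mulVecLin := hcolV ⟨w, rfl⟩
    have h2 : ((D μ)⁻¹ * B μ * (C μ * (D μ)⁻¹ * B μ)ᴴ).mulVecLin w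
        = (σ : ℂ) • ((D μ)⁻¹ * B μ).mulVec v := by
      rw [Matrix.mulVecLin_apply, ← Matrix.mulVec_mulVec, hw, Matrix.mulVec_smul]
    rw [h2] at h1
    have h3 := Submodule.smul_mem (LinearMap.range V.mulVecLin) (σ : ℂ)⁻¹ h1
    rwa [inv_smul_smul₀ hσ0] at h3
  obtain ⟨z, hz⟩ := hxmem
  rw [Matrix.mulVecLin_apply] at hz
  obtain ⟨u, hu⟩ := hcolW ⟨w, rfl⟩
  simp only [Matrix.mulVecLin_apply] at hu
  -- key fact F1 : Ṽx = x
  have hDx : (B μ).mulVec v = (D μ).mulVec (((D μ)⁻¹ * B μ).mulVec v) := by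
    rw [Matrix.mulVec_mulVec, ← Matrix.mul_assoc, hDi, Matrix.one_mul]
  have F1 : (V * (K * (Wᴴ * B μ))).mulVec v = ((D μ)⁻¹ * B μ).mulVec v := by
    have h3 : (Wᴴ * B μ).mulVec v = (Wᴴ * D μ * V).mulVec z := by
      rw [← Matrix.mulVec_mulVec, hDx, ← hz]
      simp [Matrix.mulVec_mulVec, Matrix.mul_assoc]
    calc (V * (K * (Wᴴ * B μ))).mulVec v
        = V.mulVec (K.mulVec ((Wᴴ * B μ).mulVec v)) := by
          simp [Matrix.mulVec_mulVec]
      _ = V.mulVec (K.mulVec ((Wᴴ * D μ * V).mulVec z)) := by rw [h3]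
      _ = V.mulVec z := by
          rw [Matrix.mulVec_mulVec, Matrix.mulVec_mulVec, Matrix.mul_assoc, hiK, Matrix.mul_one]
      _ = ((D μ)⁻¹ * B μ).mulVec v := hz
  -- key fact F2 : w̃ᴴ = wᴴ C D⁻¹
  have hy1 : star ((C μ * (D μ)⁻¹)ᴴ.mulVec w) = star w ᵥ* (C μ * (D μ)⁻¹) := by
    rw [Matrix.star_mulVec, Matrix.conjTranspose_conjTranspose]
  have hy2 : star ((C μ * (D μ)⁻¹)ᴴ.mulVec w) = star u ᵥ* Wᴴ := by
    rw [← hu, Matrix.star_mulVec]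
  have hCV : C μ * V = (C μ * (D μ)⁻¹) * (D μ * V) := by
    rw [Matrix.mul_assoc, ← Matrix.mul_assoc (D μ)⁻¹, hiD, Matrix.one_mul]
  have F2 : star w ᵥ* (C μ * (V * (K * Wᴴ))) = star w ᵥ* (C μ * (D μ)⁻¹) := by
    have h4 : star w ᵥ* (C μ * V) = star u ᵥ* (Wᴴ * D μ * V) := by
      rw [hCV, ← Matrix.vecMul_vecMul, ← hy1, hy2, Matrix.vecMul_vecMul, Matrix.mul_assoc]
    calc star w ᵥ* (C μ * (V * (K * Wᴴ)))
        = ((star w ᵥ* (C μ * V)) ᵥ* K) ᵥ* Wᴴ := by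
          simp [Matrix.vecMul_vecMul, Matrix.mul_assoc]
      _ = ((star u ᵥ* (Wᴴ * D μ * V)) ᵥ* K) ᵥ* Wᴴ := by rw [h4]
      _ = star u ᵥ* Wᴴ := by
          rw [Matrix.vecMul_vecMul, Matrix.vecMul_vecMul, ← Matrix.mul_assoc, hKi, Matrix.one_mul]
      _ = star w ᵥ* (C μ * (D μ)⁻¹) := by rw [← hy2, hy1]
  -- derivatives
  have hXd : HasDerivAt (fun s => (D s)⁻¹) (-((D μ)⁻¹ * deriv D μ * (D μ)⁻¹)) μ :=
    hasDerivAt_matrix_inv hD.hasDerivAt hDμ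
  have hL : HasDerivAt (fun s => C s * (D s)⁻¹ * B s)
      ((deriv C μ * (D μ)⁻¹ + C μ * -((D μ)⁻¹ * deriv D μ * (D μ)⁻¹)) * B μ
        + (C μ * (D μ)⁻¹) * deriv B μ) μ :=
    hasDerivAt_matrix_mul (hasDerivAt_matrix_mul hC.hasDerivAt hXd) hB.hasDerivAt
  have hCV' : HasDerivAt (fun s => C s * V) (deriv C μ * V) μ := by
    exact (hasDerivAt_matrix_mul hC.hasDerivAt (hasDerivAt_const μ V)).congr_deriv (by simp; rfl)
  have hWDV' : HasDerivAt (fun s => Wᴴ * D s * V) (Wᴴ * deriv D μ * V) μ := by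
    have := hasDerivAt_matrix_mul
      (hasDerivAt_matrix_mul (hasDerivAt_const μ Wᴴ) hD.hasDerivAt) (hasDerivAt_const μ V)
    exact this.congr_deriv (by simp; rfl)
  have hKd : HasDerivAt (fun s => (Wᴴ * D s * V)⁻¹) (-(K * (Wᴴ * deriv D μ * V) * K)) μ :=
    hasDerivAt_matrix_inv hWDV' hWDV
  have hWB : HasDerivAt (fun s => Wᴴ * B s) (Wᴴ * deriv B μ) μ := by
    exact (hasDerivAt_matrix_mul (hasDerivAt_const μ Wᴴ) hB.hasDerivAt).congr_deriv (by simp; rfl)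
  have hR : HasDerivAt (fun s => (C s * V) * (Wᴴ * D s * V)⁻¹ * (Wᴴ * B s))
      ((deriv C μ * V * K + (C μ * V) * -(K * (Wᴴ * deriv D μ * V) * K)) * (Wᴴ * B μ)
        + ((C μ * V) * K) * (Wᴴ * deriv B μ)) μ :=
    hasDerivAt_matrix_mul (hasDerivAt_matrix_mul hCV' hKd) hWB
  rw [show deriv (fun s => C s * (D s)⁻¹ * B s) μ = _ from hL.deriv,
    show deriv (fun s => (C s * V) * (Wᴴ * D s * V)⁻¹ * (Wᴴ * B s)) μ = _ from hR.deriv]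
  -- final algebra
  have e1 : C μ * (V * (K * (Wᴴ * deriv B μ))) = (C μ * (V * (K * Wᴴ))) * deriv B μ := by
    simp [Matrix.mul_assoc]
  have T3 : star w ⬝ᵥ (C μ * (V * (K * (Wᴴ * deriv B μ)))).mulVec v
      = star w ⬝ᵥ (C μ * ((D μ)⁻¹ * deriv B μ)).mulVec v := by
    rw [e1, ← Matrix.mulVec_mulVec, Matrix.dotProduct_mulVec, F2, ← Matrix.dotProduct_mulVec,
      Matrix.mulVec_mulVec, Matrix.mul_assoc]
  have e2 : C μ * (V * (K * (Wᴴ * (deriv D μ * (V * (K * (Wᴴ * B μ)))))))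
      = (C μ * (V * (K * Wᴴ))) * (deriv D μ * (V * (K * (Wᴴ * B μ)))) := by
    simp [Matrix.mul_assoc]
  have T2 : star w ⬝ᵥ (C μ * (V * (K * (Wᴴ * (deriv D μ * (V * (K * (Wᴴ * B μ)))))))).mulVec v
      = star w ⬝ᵥ (C μ * ((D μ)⁻¹ * (deriv D μ * ((D μ)⁻¹ * B μ)))).mulVec v := by
    rw [e2, ← Matrix.mulVec_mulVec, Matrix.dotProduct_mulVec, F2]
    rw [← Matrix.mulVec_mulVec, F1, ← Matrix.dotProduct_mulVec, Matrix.mulVec_mulVec,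
      Matrix.mulVec_mulVec]
    simp [Matrix.mul_assoc]
  have T1 : star w ⬝ᵥ (deriv C μ * (V * (K * (Wᴴ * B μ)))).mulVec v
      = star w ⬝ᵥ (deriv C μ * ((D μ)⁻¹ * B μ)).mulVec v := by
    have h5 := congrArg (fun t => star w ⬝ᵥ (deriv C μ).mulVec t) F1
    simpa only [Matrix.mulVec_mulVec] using h5
  simp only [Matrix.add_mul, Matrix.mul_neg, Matrix.neg_mul, Matrix.add_mulVec,
    Matrix.neg_mulVec, dotProduct_add, dotProduct_neg, Matrix.mul_assoc]
  rw [T1, T2, T3]
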